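/- Let n ≥ 1, u, v ∈ {0,1} and k ∈ ℕ. Then Θⁿ_{ukv} ≠ ∅ if and only if k ≤ n/2 − 1 when n is even, and k ≤ (n−1)/2 − u when n is odd. -/

import Mathlib

/-- The generator `p` of the infinite dihedral group `C₂ * C₂`, realized as the
reflection `sr 0` in `DihedralGroup 0`. -/
def pgen : DihedralGroup 0 := DihedralGroup.sr 0

/-- The generator `q` of the infinite dihedral group `C₂ * C₂`, realized as the
reflection `sr 1` in `DihedralGroup 0`. -/
def qgen : DihedralGroup 0 := DihedralGroup.sr 1

/-- `g^b` for a bit `b`: `g⁰ = 1`, `g¹ = g`. -/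
def bpow (g : DihedralGroup 0) (b : Bool) : DihedralGroup 0 := if b then g else 1

/-- The generator at (0-based) index `i`, i.e. at 1-based position `i+1`:
`q` at odd positions, `p` at even positions. -/
def genAt (i : ℕ) : DihedralGroup 0 := if i % 2 = 0 then qgen else pgen

/-- The word `w(x) = r_n^{x_n} ⋯ r_2^{x_2} r_1^{x_1}` associated with a bit string
`x = x₁…x_n`, where `r_i = q` if `i` is odd and `r_i = p` if `i` is even. -/
def wword {n : ℕ} (x : Fin n → Bool) : DihedralGroup 0 :=
  ((List.finRange n).reverse.map (fun i => bpow (genAt i.val) (x i))).prod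

/-- The reduced word `t(u,k,v) = p^u (qp)^k q^v`. -/
def tword (u : Bool) (k : ℕ) (v : Bool) : DihedralGroup 0 :=
  bpow pgen u * (qgen * pgen) ^ k * bpow qgen v

/-- `Θⁿ_{ukv}` : the set of bit strings `x` of length `n` with `w(x) = p^u (qp)^k q^v`,
empty by convention when `k < 0`. -/
def Theta (n : ℕ) (u : Bool) (k : ℤ) (v : Bool) : Finset (Fin n → Bool) :=
  if k < 0 then ∅ else Finset.univ.filter (fun x => wword x = tword u k.toNat v)

/-- `Ξ_l^α = Θ^α_{0,l,0} ∪ Θ^α_{1,l,0} ∪ Θ^α_{0,l−1,1} ∪ Θ^α_{1,l−1,1}`. -/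
def Xi (α l : ℕ) : Finset (Fin α → Bool) :=
  Theta α false l false ∪ Theta α true l false ∪
    Theta α false ((l : ℤ) - 1) true ∪ Theta α true ((l : ℤ) - 1) true

/- ### Auxiliary lemmas -/

lemma sr_mul_r' (i j : ℤ) : (DihedralGroup.sr i : DihedralGroup 0) * DihedralGroup.r j
    = DihedralGroup.sr (i + j) := by exact DihedralGroup.sr_mul_r (n := 0) i j

lemma sr_mul_sr' (i j : ℤ) : (DihedralGroup.sr i : DihedralGroup 0) * DihedralGroup.sr j
    = DihedralGroup.r (j - i) := by exact DihedralGroup.sr_mul_sr (n := 0) i j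

lemma r_mul_r' (i j : ℤ) : (DihedralGroup.r i : DihedralGroup 0) * DihedralGroup.r j
    = DihedralGroup.r (i + j) := by exact DihedralGroup.r_mul_r (n := 0) i j

lemma r_mul_sr' (i j : ℤ) : (DihedralGroup.r i : DihedralGroup 0) * DihedralGroup.sr j
    = DihedralGroup.sr (j - i) := by exact DihedralGroup.r_mul_sr (n := 0) i j

lemma one' : (1 : DihedralGroup 0) = DihedralGroup.r (0 : ℤ) := rfl

lemma pgen_eq : pgen = DihedralGroup.sr (0:ℤ) := rfl

lemma qgen_eq : qgen = DihedralGroup.sr (1:ℤ) := rfl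

lemma genAt_sq (i : ℕ) : genAt i * genAt i = 1 := by
  unfold genAt pgen qgen
  split <;> exact DihedralGroup.sr_mul_self _

lemma wword_succ {n : ℕ} (x : Fin (n+1) → Bool) :
    wword x = bpow (genAt n) (x (Fin.last n)) * wword (fun i : Fin n => x i.castSucc) := by
  unfold wword
  simp only [List.finRange_succ_last, List.reverse_append, List.map_append, List.prod_append,
    List.map_reverse, List.map_map, List.reverse_singleton, List.map_cons, List.map_nil,
    List.prod_cons, List.prod_nil, mul_one, Function.comp_def, Fin.coe_castSucc, Fin.val_last]

/-- Reachability: `g` is the word of some bit string of length `n`. -/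
def reach (n : ℕ) (g : DihedralGroup 0) : Prop := ∃ x : Fin n → Bool, wword x = g

lemma reach_succ (n : ℕ) (g : DihedralGroup 0) :
    reach (n+1) g ↔ reach n g ∨ reach n (genAt n * g) := by
  constructor
  · rintro ⟨x, rfl⟩
    rw [wword_succ]
    cases hb : x (Fin.last n)
    · exact Or.inl ⟨fun i => x i.castSucc, by simp [bpow]⟩
    · refine Or.inr ⟨fun i => x i.castSucc, ?_⟩
      show wword _ = genAt n * (bpow (genAt n) true * wword _)
      rw [bpow, if_pos rfl, ← mul_assoc, genAt_sq, one_mul]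
  · rintro (⟨y, hy⟩ | ⟨y, hy⟩)
    · refine ⟨(Fin.snoc y false : Fin (n+1) → Bool), ?_⟩
      rw [wword_succ]
      have h2 : (fun i : Fin n => (Fin.snoc y false : Fin (n+1) → Bool) i.castSucc) = y := by
        funext i; simp
      rw [h2, Fin.snoc_last]
      simpa [bpow] using hy
    · refine ⟨(Fin.snoc y true : Fin (n+1) → Bool), ?_⟩
      rw [wword_succ]
      have h2 : (fun i : Fin n => (Fin.snoc y true : Fin (n+1) → Bool) i.castSucc) = y := by
        funext i; simp
      rw [h2, Fin.snoc_last, hy]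
      show genAt n * _ = g
      rw [← mul_assoc, genAt_sq, one_mul]

lemma reach_one (g : DihedralGroup 0) :
    reach 1 g ↔ g = DihedralGroup.r (0:ℤ) ∨ g = DihedralGroup.sr (1:ℤ) := by
  rw [← one', ← qgen_eq]
  constructor
  · rintro ⟨x, rfl⟩
    have : wword x = bpow qgen (x 0) := by
      unfold wword
      simp [List.finRange, genAt]
    rw [this, bpow]
    cases x 0 <;> simp
  · rintro (rfl | rfl)
    · exact ⟨fun _ => false, by unfold wword; simp [List.finRange, bpow]⟩
    · exact ⟨fun _ => true, by unfold wword; simp [List.finRange, bpow, genAt]⟩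

lemma reach_iff (n : ℕ) (hn : 1 ≤ n) : ∀ j : ℤ,
    (reach n (DihedralGroup.r j) ↔ 1 - (((n+1)/2 : ℕ) : ℤ) ≤ j ∧ j ≤ ((n/2 : ℕ) : ℤ)) ∧
    (reach n (DihedralGroup.sr j) ↔ 1 - ((n/2 : ℕ) : ℤ) ≤ j ∧ j ≤ (((n+1)/2 : ℕ) : ℤ)) := by
  induction n, hn using Nat.le_induction with
  | base =>
    intro j
    constructor
    · rw [reach_one]
      constructor
      · rintro (h | h)
        · injection h with h
          have h' : j = (0 : ℤ) := h
          omega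
        · exact absurd h (by simp)
      · rintro ⟨h1, h2⟩
        have : j = (0 : ℤ) := by omega
        subst this
        exact Or.inl rfl
    · rw [reach_one]
      constructor
      · rintro (h | h)
        · exact absurd h (by simp)
        · injection h with h
          have h' : j = (1 : ℤ) := h
          omega
      · rintro ⟨h1, h2⟩
        have : j = (1 : ℤ) := by omega
        subst this
        exact Or.inr rfl
  | succ n hn ih =>
    intro j
    rcases Nat.even_or_odd n with he | ho
    · have hmod : n % 2 = 0 := Nat.even_iff.mp he
      have hg : genAt n = qgen := by unfold genAt; rw [if_pos hmod]
      constructor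
      · rw [reach_succ, hg, qgen_eq, sr_mul_r', (ih j).1, (ih (1 + j)).2]
        omega
      · rw [reach_succ, hg, qgen_eq, sr_mul_sr', (ih j).2, (ih (j - 1)).1]
        omega
    · have hmod : n % 2 = 1 := Nat.odd_iff.mp ho
      have hg : genAt n = pgen := by unfold genAt; rw [if_neg (by omega)]
      constructor
      · rw [reach_succ, hg, pgen_eq, sr_mul_r', (ih j).1, zero_add, (ih j).2]
        omega
      · rw [reach_succ, hg, pgen_eq, sr_mul_sr', (ih j).2, sub_zero, (ih j).1]
        omega

lemma qp_eq : qgen * pgen = DihedralGroup.r (-1 : ℤ) := by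
  rw [qgen_eq, pgen_eq, sr_mul_sr']
  norm_num

lemma qp_pow (k : ℕ) : (qgen * pgen) ^ k = DihedralGroup.r (-(k : ℤ)) := by
  induction k with
  | zero => rw [pow_zero, one']; norm_num
  | succ k ih =>
    rw [pow_succ, ih, qp_eq, r_mul_r']
    congr 1
    push_cast
    ring_nf; rfl

lemma tword_eq (u v : Bool) (k : ℕ) :
    tword u k v = match u, v with
      | false, false => DihedralGroup.r (-(k:ℤ))
      | true, false => DihedralGroup.sr (-(k:ℤ))
      | false, true => DihedralGroup.sr ((k+1 : ℤ))
      | true, true => DihedralGroup.r ((k+1 : ℤ)) := by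
  unfold tword
  rw [qp_pow]
  cases u <;> cases v <;>
    simp only [bpow, Bool.false_eq_true, if_false, if_true, one_mul, mul_one, pgen_eq, qgen_eq]
  · rw [r_mul_sr']; congr 1; ring_nf; rfl
  · rw [sr_mul_r']; congr 1; ring_nf; rfl
  · rw [sr_mul_r', sr_mul_sr']; congr 1; ring_nf; rfl

/-- `Θⁿ_{ukv} ≠ ∅` iff `k ≤ n/2 − 1` when `n` is even, and
`k ≤ (n−1)/2 − u` when `n` is odd. -/
theorem statement11 (n : ℕ) (hn : 1 ≤ n) (u v : Bool) (k : ℕ) :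
    (Theta n u (k : ℤ) v).Nonempty ↔
      (if n % 2 = 0 then (k : ℤ) ≤ (n : ℤ) / 2 - 1
       else (k : ℤ) ≤ ((n : ℤ) - 1) / 2 - (if u then 1 else 0)) := by
  have h1 : (Theta n u (k : ℤ) v).Nonempty ↔ reach n (tword u k v) := by
    unfold Theta
    rw [if_neg (by omega)]
    constructor
    · rintro ⟨x, hx⟩
      rw [Finset.mem_filter] at hx
      exact ⟨x, by simpa using hx.2⟩
    · rintro ⟨x, hx⟩
      exact ⟨x, Finset.mem_filter.mpr ⟨Finset.mem_univ _, by simpa using hx⟩⟩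
  rw [h1, tword_eq]
  rcases Nat.mod_two_eq_zero_or_one n with h | h
  · rw [if_pos h]
    cases u <;> cases v <;>
      [rw [(reach_iff n hn (-(k:ℤ))).1]; rw [(reach_iff n hn ((k:ℤ)+1)).2];
       rw [(reach_iff n hn (-(k:ℤ))).2]; rw [(reach_iff n hn ((k:ℤ)+1)).1]] <;> omega
  · rw [if_neg (by omega : ¬ n % 2 = 0)]
    cases u <;> cases v <;>
      simp only [Bool.false_eq_true, reduceIte] <;>
      [rw [(reach_iff n hn (-(k:ℤ))).1]; rw [(reach_iff n hn ((k:ℤ)+1)).2];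
       rw [(reach_iff n hn (-(k:ℤ))).2]; rw [(reach_iff n hn ((k:ℤ)+1)).1]] <;> omega
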